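/- Fix integers M ≥ 1, s ≥ 0, a real P > 0 and α ∈ [0,1]. Let h_1, h_2,…,h_{s+1}, z be independent standard complex Gaussian vectors in ℂ^M. Then P( √P·‖h_1‖² + Re⟨√P·Σ_{i=2}^{s+1} h_i + z, h_1⟩ < α·√P·‖h_1‖² ) ≤ ( 1 + P(1−α)²/(Ps+1) )^{−M}. -/

import Mathlib

open MeasureTheory ProbabilityTheory

/-- Standard complex Gaussian measure on `ℂ^M`: the `2M` real coordinates are
i.i.d. real Gaussian `N(0, 1/2)`. -/
noncomputable def stdCGaussian (M : ℕ) : Measure (Fin M → ℂ) :=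
  (Measure.pi fun _ : Fin M =>
    (gaussianReal 0 (1/2)).prod (gaussianReal 0 (1/2))).map
    (fun f i => ⟨(f i).1, (f i).2⟩)

/-- Complex inner product `⟨x, v⟩ = ∑ m, x m * conj (v m)`. -/
noncomputable def cip {M : ℕ} (x v : Fin M → ℂ) : ℂ :=
  ∑ m, x m * (starRingEnd ℂ) (v m)

/-- Squared Euclidean norm `‖v‖² = ∑ m, |v m|²`. -/
noncomputable def cnSq {M : ℕ} (v : Fin M → ℂ) : ℝ :=
  ∑ m, Complex.normSq (v m)

/-- The standard normal tail function `Q`. -/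
noncomputable def Qfun (x : ℝ) : ℝ :=
  ∫ t in Set.Ioi x, (Real.sqrt (2 * Real.pi))⁻¹ * Real.exp (-t ^ 2 / 2)

open Real
open scoped NNReal ENNReal

lemma cexp_quad_eq {b θ : ℝ} : ∀ x : ℝ, Complex.exp (-(b:ℂ) * x ^ 2 + θ * x + 0)
    = ((rexp (θ * x - b * x ^ 2) : ℝ) : ℂ) := by
  intro x
  rw [Complex.ofReal_exp]
  congr 1
  push_cast; ring

lemma integrable_rexp_quad {b : ℝ} (hb : 0 < b) (θ : ℝ) :
    Integrable fun x : ℝ => rexp (θ * x - b * x ^ 2) := by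
  have h := integrable_cexp_quadratic (b := (b : ℂ)) (by simpa using hb) θ 0
  simp_rw [cexp_quad_eq] at h
  refine h.norm.congr (Filter.Eventually.of_forall fun x => ?_)
  simp only [Complex.norm_real, Real.norm_eq_abs, abs_of_pos (exp_pos _)]

lemma integral_rexp_quad {b : ℝ} (hb : 0 < b) (θ : ℝ) :
    ∫ x : ℝ, rexp (θ * x - b * x ^ 2) = Real.sqrt (π / b) * rexp (θ ^ 2 / (4 * b)) := by
  have h := integral_cexp_quadratic (b := -(b : ℂ)) (by simpa using hb) (θ : ℂ) 0
  simp_rw [cexp_quad_eq] at h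
  rw [show (∫ (x : ℝ), ((rexp (θ * x - b * x ^ 2) : ℝ) : ℂ)) = ((∫ x : ℝ, rexp (θ * x - b * x ^ 2) : ℝ) : ℂ) from integral_ofReal] at h
  have h2 : ((Real.pi / b : ℝ) : ℂ) ^ (1/2 : ℂ) = ((Real.sqrt (π / b) : ℝ) : ℂ) := by
    rw [Real.sqrt_eq_rpow, Complex.ofReal_cpow (by positivity)]
    norm_num
  rw [neg_neg] at h
  rw [show ((π : ℂ) / (b:ℂ)) = ((Real.pi / b : ℝ) : ℂ) by push_cast; ring, h2] at h
  have h3 : Complex.exp (0 - (θ:ℂ)^2 / (4 * -(b:ℂ))) = ((rexp (θ ^ 2 / (4 * b)) : ℝ) : ℂ) := by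
    rw [Complex.ofReal_exp]; congr 1; push_cast; ring
  rw [h3, ← Complex.ofReal_mul] at h
  exact_mod_cast h

lemma lint_gauss (θ : ℝ) {c : ℝ} (hc : 0 ≤ c) :
    ∫⁻ x, ENNReal.ofReal (rexp (θ * x - c * x ^ 2)) ∂(gaussianReal 0 (1/2))
      = ENNReal.ofReal ((Real.sqrt (1 + c))⁻¹ * rexp (θ ^ 2 / (4 * (1 + c)))) := by
  have hb : (0:ℝ) < 1 + c := by linarith
  have hv : ((1 : ℝ≥0)/2) ≠ 0 := by norm_num
  rw [gaussianReal_of_var_ne_zero _ hv,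
    lintegral_withDensity_eq_lintegral_mul _ (measurable_gaussianPDF _ _)
      (by fun_prop : Measurable fun x : ℝ => ENNReal.ofReal (rexp (θ * x - c * x ^ 2)))]
  have hpt : ∀ x : ℝ, (gaussianPDF 0 (1/2) * fun x => ENNReal.ofReal (rexp (θ * x - c * x ^ 2))) x
      = ENNReal.ofReal ((Real.sqrt π)⁻¹ * rexp (θ * x - (1 + c) * x ^ 2)) := by
    intro x
    simp only [Pi.mul_apply, gaussianPDF, gaussianPDFReal]
    rw [← ENNReal.ofReal_mul (by positivity)]
    congr 1
    have : ((2:ℝ) * π * ((1:ℝ≥0)/2 : ℝ≥0)) = π := by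
      push_cast; ring
    rw [this]
    have h12 : ((1/2 : ℝ≥0) : ℝ) = 1/2 := by norm_num
    rw [h12, mul_assoc, ← Real.exp_add]
    congr 2
    ring
  simp_rw [hpt]
  rw [← ofReal_integral_eq_lintegral_ofReal ((integrable_rexp_quad hb θ).const_mul _)
    (Filter.Eventually.of_forall fun x => by positivity)]
  rw [integral_const_mul, integral_rexp_quad hb θ]
  congr 1
  rw [Real.sqrt_div Real.pi_pos.le]
  have hπ : Real.sqrt π ≠ 0 := by positivity
  have h1c : Real.sqrt (1 + c) ≠ 0 := by positivity
  field_simp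

lemma lint_gauss2 (a b : ℝ) {c : ℝ} (hc : 0 ≤ c) :
    ∫⁻ p : ℝ × ℝ, ENNReal.ofReal (rexp (a * p.1 + b * p.2 - c * (p.1 ^ 2 + p.2 ^ 2)))
        ∂((gaussianReal 0 (1/2)).prod (gaussianReal 0 (1/2)))
      = ENNReal.ofReal ((1 + c)⁻¹ * rexp ((a ^ 2 + b ^ 2) / (4 * (1 + c)))) := by
  have hb : (0:ℝ) < 1 + c := by linarith
  have hsplit : ∀ p : ℝ × ℝ,
      ENNReal.ofReal (rexp (a * p.1 + b * p.2 - c * (p.1 ^ 2 + p.2 ^ 2)))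
      = ENNReal.ofReal (rexp (a * p.1 - c * p.1 ^ 2))
        * ENNReal.ofReal (rexp (b * p.2 - c * p.2 ^ 2)) := by
    intro p
    rw [← ENNReal.ofReal_mul (exp_pos _).le, ← Real.exp_add]
    congr 2
    ring
  simp_rw [hsplit]
  rw [lintegral_prod_mul (f := fun x => ENNReal.ofReal (rexp (a * x - c * x ^ 2)))
    (g := fun y => ENNReal.ofReal (rexp (b * y - c * y ^ 2)))
    (by fun_prop) (by fun_prop)]
  rw [lint_gauss a hc, lint_gauss b hc, ← ENNReal.ofReal_mul (by positivity)]
  congr 1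
  have hs : Real.sqrt (1 + c) * Real.sqrt (1 + c) = 1 + c := Real.mul_self_sqrt hb.le
  rw [show (Real.sqrt (1+c))⁻¹ * rexp (a^2/(4*(1+c))) * ((Real.sqrt (1+c))⁻¹ * rexp (b^2/(4*(1+c))))
      = (Real.sqrt (1+c) * Real.sqrt (1+c))⁻¹ * (rexp (a^2/(4*(1+c))) * rexp (b^2/(4*(1+c)))) from by
    rw [mul_inv]; ring]
  rw [hs, ← Real.exp_add]
  congr 2
  ring

lemma lintegral_pi_fin {n : ℕ} {E : Type*} [MeasurableSpace E] (μ : Measure E)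
    [SigmaFinite μ] (f : Fin n → E → ℝ≥0∞) (hf : ∀ i, Measurable (f i)) :
    ∫⁻ x : Fin n → E, ∏ i, f i (x i) ∂(Measure.pi fun _ => μ) = ∏ i, ∫⁻ x, f i x ∂μ := by
  induction n with
  | zero => simp [lintegral_const]
  | succ n ih =>
    have hm := measurePreserving_piFinSuccAbove (fun _ : Fin (n + 1) => μ) 0
    have hmeas : Measurable fun x : Fin (n + 1) → E => ∏ i, f i (x i) :=
      Finset.measurable_prod _ fun i _ => (hf i).comp (measurable_pi_apply i)
    rw [← (hm.symm _).lintegral_comp hmeas]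
    simp only [Function.comp_def, MeasurableEquiv.piFinSuccAbove_symm_apply, Fin.insertNthEquiv,
      Fin.prod_univ_succ, Fin.insertNth_zero, Equiv.coe_fn_mk, Fin.zero_succAbove, Fin.cons_zero,
      Fin.cons_succ, cast_eq]
    rw [lintegral_prod_mul (f := f 0)
      (g := fun y : Fin n → E => ∏ i, f i.succ (y i))
      (hf 0).aemeasurable
      (Finset.measurable_prod _ fun i _ => (hf i.succ).comp (measurable_pi_apply i)).aemeasurable]
    rw [ih (fun i => f i.succ) (fun i => hf i.succ)]

lemma measurable_mkfun (M : ℕ) :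
    Measurable (fun f : Fin M → ℝ × ℝ => fun i => (⟨(f i).1, (f i).2⟩ : ℂ)) :=
  measurable_pi_lambda _ fun i =>
    Complex.measurableEquivRealProd.symm.measurable.comp (measurable_pi_apply i)

lemma continuous_expr {M : ℕ} (v : Fin M → ℂ) (θ c : ℝ) :
    Continuous fun x : Fin M → ℂ => θ * (cip x v).re - c * cnSq x := by
  unfold cip cnSq
  apply Continuous.sub
  · exact continuous_const.mul (Complex.continuous_re.comp
      (continuous_finset_sum _ fun m _ => ((continuous_apply m).mul continuous_const)))
  · exact continuous_const.mul
      (continuous_finset_sum _ fun m _ => Complex.continuous_normSq.comp (continuous_apply m))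

lemma lint_std (M : ℕ) (v : Fin M → ℂ) (θ : ℝ) {c : ℝ} (hc : 0 ≤ c) :
    ∫⁻ x, ENNReal.ofReal (rexp (θ * (cip x v).re - c * cnSq x)) ∂(stdCGaussian M)
      = ENNReal.ofReal ((((1 + c) ^ M)⁻¹) * rexp (θ ^ 2 * cnSq v / (4 * (1 + c)))) := by
  have hb : (0:ℝ) < 1 + c := by linarith
  rw [stdCGaussian, lintegral_map
    (((continuous_expr v θ c).rexp.measurable).ennreal_ofReal) (measurable_mkfun M)]
  have hre : ∀ f : Fin M → ℝ × ℝ, (cip (fun i => (⟨(f i).1, (f i).2⟩ : ℂ)) v).re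
      = ∑ m, ((v m).re * (f m).1 + (v m).im * (f m).2) := by
    intro f
    rw [cip, Complex.re_sum]
    refine Finset.sum_congr rfl fun m _ => ?_
    simp [Complex.mul_re, Complex.conj_re, Complex.conj_im]
    ring
  have hsq : ∀ f : Fin M → ℝ × ℝ,
      cnSq (fun i => (⟨(f i).1, (f i).2⟩ : ℂ)) = ∑ m, ((f m).1 ^ 2 + (f m).2 ^ 2) := by
    intro f
    rw [cnSq]
    refine Finset.sum_congr rfl fun m _ => ?_
    rw [Complex.normSq_mk]
    ring
  have hexp : ∀ f : Fin M → ℝ × ℝ,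
      ENNReal.ofReal (rexp (θ * (cip (fun i => (⟨(f i).1, (f i).2⟩ : ℂ)) v).re
          - c * cnSq (fun i => (⟨(f i).1, (f i).2⟩ : ℂ))))
      = ∏ m, ENNReal.ofReal (rexp ((θ * (v m).re) * (f m).1 + (θ * (v m).im) * (f m).2
          - c * ((f m).1 ^ 2 + (f m).2 ^ 2))) := by
    intro f
    have hsum : θ * (∑ m, ((v m).re * (f m).1 + (v m).im * (f m).2))
        - c * ∑ m, ((f m).1 ^ 2 + (f m).2 ^ 2)
        = ∑ m, ((θ * (v m).re) * (f m).1 + (θ * (v m).im) * (f m).2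
            - c * ((f m).1 ^ 2 + (f m).2 ^ 2)) := by
      rw [Finset.mul_sum, Finset.mul_sum, ← Finset.sum_sub_distrib]
      exact Finset.sum_congr rfl fun m _ => by ring
    rw [hre, hsq, hsum, Real.exp_sum, ENNReal.ofReal_prod_of_nonneg (fun i _ => (exp_pos _).le)]
  simp_rw [hexp]
  rw [lintegral_pi_fin ((gaussianReal 0 (1/2)).prod (gaussianReal 0 (1/2)))
    (fun m (p : ℝ × ℝ) => ENNReal.ofReal (rexp ((θ * (v m).re) * p.1 + (θ * (v m).im) * p.2
      - c * (p.1 ^ 2 + p.2 ^ 2)))) (fun m => by fun_prop)]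
  rw [Finset.prod_congr rfl fun m _ => lint_gauss2 (θ * (v m).re) (θ * (v m).im) hc]
  rw [← ENNReal.ofReal_prod_of_nonneg (fun i _ => by positivity)]
  congr 1
  rw [Finset.prod_mul_distrib, Finset.prod_const, ← Real.exp_sum, Finset.card_univ,
    Fintype.card_fin, ← inv_pow]
  congr 1
  rw [cnSq, Finset.mul_sum, ← Finset.sum_div]
  congr 2
  exact Finset.sum_congr rfl fun m _ => by rw [Complex.normSq_apply]; ring

instance stdCGaussian_prob (M : ℕ) : IsProbabilityMeasure (stdCGaussian M) :=
  Measure.isProbabilityMeasure_map (measurable_mkfun M).aemeasurable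


lemma lint_std_lin (M : ℕ) (v : Fin M → ℂ) (θ : ℝ) :
    ∫⁻ x, ENNReal.ofReal (rexp (θ * (cip x v).re)) ∂(stdCGaussian M)
      = ENNReal.ofReal (rexp (θ ^ 2 * cnSq v / 4)) := by
  simpa using lint_std M v θ (le_refl (0:ℝ))

lemma lint_std_sq (M : ℕ) {c : ℝ} (hc : 0 ≤ c) :
    ∫⁻ x, ENNReal.ofReal (rexp (-(c * cnSq x))) ∂(stdCGaussian M)
      = ENNReal.ofReal (((1 + c) ^ M)⁻¹) := by
  have h := lint_std M (fun _ => 0) 0 hc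
  simp only [zero_mul, zero_sub, ne_eq, OfNat.ofNat_ne_zero, not_false_eq_true, zero_pow,
    zero_div, Real.exp_zero, mul_one] at h
  exact h

lemma continuous_cip_re {M : ℕ} (v : Fin M → ℂ) :
    Continuous fun x : Fin M → ℂ => (cip x v).re := by
  unfold cip
  exact Complex.continuous_re.comp
    (continuous_finset_sum _ fun m _ => ((continuous_apply m).mul continuous_const))

lemma continuous_cnSq {M : ℕ} : Continuous fun v : Fin M → ℂ => cnSq v := by
  unfold cnSq
  exact continuous_finset_sum _ fun m _ => Complex.continuous_normSq.comp (continuous_apply m)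

lemma measurable_ofReal_exp_lin {M : ℕ} (v : Fin M → ℂ) (θ : ℝ) :
    Measurable fun x : Fin M → ℂ => ENNReal.ofReal (rexp (θ * (cip x v).re)) :=
  ((Real.continuous_exp.comp (continuous_const.mul (continuous_cip_re v))).measurable).ennreal_ofReal

lemma continuous_bigcip {M s : ℕ} (P : ℝ) :
    Continuous fun ω : (Fin M → ℂ) × ((Fin s → Fin M → ℂ) × (Fin M → ℂ)) =>
      (cip (fun m => (Real.sqrt P : ℂ) * (∑ i, ω.2.1 i m) + ω.2.2 m) ω.1).re := by
  unfold cip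
  apply Complex.continuous_re.comp
  apply continuous_finset_sum
  intro m _
  apply Continuous.mul
  · apply Continuous.add
    · exact continuous_const.mul (continuous_finset_sum _ fun i _ =>
        ((continuous_apply m).comp ((continuous_apply i).comp (continuous_fst.comp continuous_snd))))
    · exact (continuous_apply m).comp (continuous_snd.comp continuous_snd)
  · exact Complex.continuous_conj.comp ((continuous_apply m).comp continuous_fst)

lemma cip_decomp {M s : ℕ} (P : ℝ) (u z : Fin M → ℂ) (H : Fin s → Fin M → ℂ) :
    (cip (fun m => (Real.sqrt P : ℂ) * (∑ i, H i m) + z m) u).re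
      = (∑ i, Real.sqrt P * (cip (H i) u).re) + (cip z u).re := by
  simp only [cip, Complex.re_sum, add_mul, Complex.add_re]
  rw [Finset.sum_add_distrib]
  congr 1
  have h1 : ∀ m, (((Real.sqrt P : ℂ) * (∑ i, H i m)) * (starRingEnd ℂ) (u m)).re
      = ∑ i, Real.sqrt P * (H i m * (starRingEnd ℂ) (u m)).re := by
    intro m
    rw [mul_assoc, Finset.sum_mul, Complex.re_ofReal_mul, Complex.re_sum, Finset.mul_sum]
  simp_rw [h1]
  rw [Finset.sum_comm]
  exact Finset.sum_congr rfl fun i _ => (Finset.mul_sum _ _ _).symm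


/-- Misdetection probability of the matched-filter detector with threshold
`α√P‖h₁‖²`, averaged over the Rayleigh-fading channel vector `h₁` of the user of
interest, conditioned on `s` colliding users:
`P(√P‖h₁‖² + Re⟨√P ∑ᵢ hᵢ + z, h₁⟩ < α√P‖h₁‖²) ≤ (1 + P(1−α)²/(Ps+1))^{−M}`. -/
theorem matched_filter_misdetection_avg (M : ℕ) (hM : 1 ≤ M)
    (s : ℕ) (P : ℝ) (hP : 0 < P) (α : ℝ) (hα0 : 0 ≤ α) (hα1 : α ≤ 1) :
    ((stdCGaussian M).prod
      ((Measure.pi fun _ : Fin s => stdCGaussian M).prod (stdCGaussian M)))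
      {ω : (Fin M → ℂ) × ((Fin s → Fin M → ℂ) × (Fin M → ℂ)) |
        Real.sqrt P * cnSq ω.1 +
          (cip (fun m => Real.sqrt P * (∑ i, ω.2.1 i m) + ω.2.2 m) ω.1).re
          < α * Real.sqrt P * cnSq ω.1}
      ≤ ENNReal.ofReal (((1 + P * (1 - α) ^ 2 / (P * s + 1)) ^ M)⁻¹) := by
  have hden : (0:ℝ) < P * s + 1 := by positivity
  have h1α : (0:ℝ) ≤ 1 - α := by linarith
  have hsqP : Real.sqrt P ^ 2 = P := Real.sq_sqrt hP.le
  set t : ℝ := 2 * (1 - α) * Real.sqrt P / (P * s + 1) with ht_def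
  have ht : 0 ≤ t := by
    apply div_nonneg _ hden.le
    have h := Real.sqrt_nonneg P
    positivity
  set c : ℝ := P * (1 - α) ^ 2 / (P * s + 1) with hc_def
  have hc : 0 ≤ c := by positivity
  set ν := (Measure.pi fun _ : Fin s => stdCGaussian M).prod (stdCGaussian M) with hν
  set E : (Fin M → ℂ) × ((Fin s → Fin M → ℂ) × (Fin M → ℂ)) → ℝ :=
    fun ω => -(t * ((1 - α) * Real.sqrt P * cnSq ω.1 +
      (cip (fun m => Real.sqrt P * (∑ i, ω.2.1 i m) + ω.2.2 m) ω.1).re)) with hE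
  have hEcont : Continuous E := by
    apply Continuous.neg
    apply continuous_const.mul
    exact ((continuous_const.mul (continuous_cnSq.comp continuous_fst)).add (continuous_bigcip P))
  have hfmeas : Measurable fun ω => ENNReal.ofReal (rexp (E ω)) :=
    ((Real.continuous_exp.comp hEcont).measurable).ennreal_ofReal
  have hAmeas : MeasurableSet {ω : (Fin M → ℂ) × ((Fin s → Fin M → ℂ) × (Fin M → ℂ)) |
      Real.sqrt P * cnSq ω.1 +
        (cip (fun m => Real.sqrt P * (∑ i, ω.2.1 i m) + ω.2.2 m) ω.1).re
        < α * Real.sqrt P * cnSq ω.1} := by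
    apply measurableSet_lt
    · exact ((continuous_const.mul (continuous_cnSq.comp continuous_fst)).add
        (continuous_bigcip P)).measurable
    · exact (continuous_const.mul (continuous_cnSq.comp continuous_fst)).measurable
  have stepA : ((stdCGaussian M).prod ν)
      {ω : (Fin M → ℂ) × ((Fin s → Fin M → ℂ) × (Fin M → ℂ)) |
        Real.sqrt P * cnSq ω.1 +
          (cip (fun m => Real.sqrt P * (∑ i, ω.2.1 i m) + ω.2.2 m) ω.1).re
          < α * Real.sqrt P * cnSq ω.1}
      ≤ ∫⁻ ω, ENNReal.ofReal (rexp (E ω)) ∂((stdCGaussian M).prod ν) := by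
    rw [← lintegral_indicator_one hAmeas]
    refine lintegral_mono fun ω => ?_
    by_cases hω : ω ∈ {ω : (Fin M → ℂ) × ((Fin s → Fin M → ℂ) × (Fin M → ℂ)) |
        Real.sqrt P * cnSq ω.1 +
          (cip (fun m => Real.sqrt P * (∑ i, ω.2.1 i m) + ω.2.2 m) ω.1).re
          < α * Real.sqrt P * cnSq ω.1}
    · rw [Set.indicator_of_mem hω]
      refine ENNReal.one_le_ofReal.mpr (Real.one_le_exp ?_)
      have hm : Real.sqrt P * cnSq ω.1 +
          (cip (fun m => Real.sqrt P * (∑ i, ω.2.1 i m) + ω.2.2 m) ω.1).re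
          < α * Real.sqrt P * cnSq ω.1 := hω
      have h0 : (1 - α) * Real.sqrt P * cnSq ω.1 +
          (cip (fun m => Real.sqrt P * (∑ i, ω.2.1 i m) + ω.2.2 m) ω.1).re ≤ 0 := by
        nlinarith [hm]
      simp only [hE]
      exact neg_nonneg.mpr (mul_nonpos_of_nonneg_of_nonpos ht h0)
    · rw [Set.indicator_of_notMem hω]
      exact zero_le
  refine stepA.trans (le_of_eq ?_)
  have inner : ∀ u : Fin M → ℂ,
      ∫⁻ w, ENNReal.ofReal (rexp (E (u, w))) ∂ν = ENNReal.ofReal (rexp (-(c * cnSq u))) := by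
    intro u
    have hptw : ∀ w : (Fin s → Fin M → ℂ) × (Fin M → ℂ),
        ENNReal.ofReal (rexp (E (u, w)))
        = ENNReal.ofReal (rexp (-(t * (1 - α) * Real.sqrt P) * cnSq u)) *
            ((∏ i, ENNReal.ofReal (rexp ((-(t * Real.sqrt P)) * (cip (w.1 i) u).re))) *
              ENNReal.ofReal (rexp ((-t) * (cip w.2 u).re))) := by
      intro w
      rw [← ENNReal.ofReal_prod_of_nonneg (fun i _ => (Real.exp_pos _).le), ← Real.exp_sum,
        ← ENNReal.ofReal_mul (Real.exp_pos _).le, ← Real.exp_add,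
        ← ENNReal.ofReal_mul (Real.exp_pos _).le, ← Real.exp_add]
      congr 1
      simp only [hE]
      rw [cip_decomp P u w.2 w.1]
      rw [show (∑ i, (-(t * Real.sqrt P)) * (cip (w.1 i) u).re)
          = -(t * Real.sqrt P) * ∑ i, (cip (w.1 i) u).re from (Finset.mul_sum _ _ _).symm,
        show (∑ i, Real.sqrt P * (cip (w.1 i) u).re)
          = Real.sqrt P * ∑ i, (cip (w.1 i) u).re from (Finset.mul_sum _ _ _).symm]
      ring
    rw [lintegral_congr hptw]
    have hmw : Measurable fun w : (Fin s → Fin M → ℂ) × (Fin M → ℂ) =>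
        (∏ i, ENNReal.ofReal (rexp ((-(t * Real.sqrt P)) * (cip (w.1 i) u).re))) *
          ENNReal.ofReal (rexp ((-t) * (cip w.2 u).re)) := by
      apply Measurable.mul
      · apply Finset.measurable_prod
        intro i _
        exact (measurable_ofReal_exp_lin u _).comp ((measurable_pi_apply i).comp measurable_fst)
      · exact (measurable_ofReal_exp_lin u _).comp measurable_snd
    rw [lintegral_const_mul _ hmw]
    rw [hν, lintegral_prod_mul (f := fun H : Fin s → Fin M → ℂ =>
        ∏ i, ENNReal.ofReal (rexp ((-(t * Real.sqrt P)) * (cip (H i) u).re)))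
      (g := fun z => ENNReal.ofReal (rexp ((-t) * (cip z u).re)))
      (Finset.measurable_prod _ fun i _ =>
        (measurable_ofReal_exp_lin u _).comp (measurable_pi_apply i)).aemeasurable
      (measurable_ofReal_exp_lin u _).aemeasurable]
    rw [lintegral_pi_fin (stdCGaussian M)
      (fun _ (h : Fin M → ℂ) => ENNReal.ofReal (rexp ((-(t * Real.sqrt P)) * (cip h u).re)))
      (fun i => measurable_ofReal_exp_lin u _)]
    simp_rw [lint_std_lin M u]
    rw [Finset.prod_const, Finset.card_univ, Fintype.card_fin]
    rw [← ENNReal.ofReal_pow (Real.exp_pos _).le, ← Real.exp_nat_mul,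
      ← ENNReal.ofReal_mul (Real.exp_pos _).le, ← Real.exp_add,
      ← ENNReal.ofReal_mul (Real.exp_pos _).le, ← Real.exp_add]
    congr 1
    have h1 : (-(t * Real.sqrt P)) ^ 2 = t ^ 2 * P := by
      rw [neg_sq, mul_pow, hsqP]
    have h2 : (-t : ℝ) ^ 2 = t ^ 2 := neg_sq t
    rw [h1, h2]
    have coeff : -(t * (1 - α) * Real.sqrt P) + ((s : ℝ) * (t ^ 2 * P / 4) + t ^ 2 / 4) = -c := by
      rw [ht_def, hc_def]
      obtain ⟨q, hq⟩ : ∃ q, Real.sqrt P = q := ⟨_, rfl⟩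
      have hPq : P = q ^ 2 := by rw [← hq, hsqP]
      rw [hq, hPq]
      have hdq : q ^ 2 * (s : ℝ) + 1 ≠ 0 := by rw [← hPq]; exact hden.ne'
      field_simp
      ring
    congr 1
    linear_combination cnSq u * coeff
  rw [lintegral_prod _ hfmeas.aemeasurable]
  rw [lintegral_congr inner]
  exact lint_std_sq M hc
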